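/- Assume conditions (H2), (H3) and (H4). Then for all multi-indices 𝐢, 𝐣 ∈ ℕ^d, the restriction to C_𝐣 of the composite map π_{𝐢+𝐣} ∘ 𝐓^𝐢 is an injective k-linear map from C_𝐣 to C_{𝐢+𝐣}. -/
import Mathlib


/-- Under (H2)–(H4), for all multi-indices `𝐢, 𝐣` the
restriction of `π (𝐢+𝐣) ∘ 𝐓^𝐢` to `C 𝐣` is an injective map into `C (𝐢+𝐣)`. -/
theorem stmt_3
    (k : Type*) [Field k] (V : Type*) [AddCommGroup V] [Module k V]
    (d : ℕ) (hd : 1 ≤ d)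
    (C : (Fin d → ℕ) → Submodule k V)
    (hC : DirectSum.IsInternal C)
    (hCne : ∀ m, C m ≠ ⊥)
    (π : (Fin d → ℕ) → (V →ₗ[k] V))
    (hπ_eq : ∀ m, ∀ v ∈ C m, π m v = v)
    (hπ_ne : ∀ m m', m ≠ m' → ∀ v ∈ C m', π m v = 0)
    (T : Fin d → Module.End k V)
    (hcomm : ∀ a b, Commute (T a) (T b))
    (TT : (Fin d → ℕ) → Module.End k V)
    (hTT0 : TT 0 = 1)
    (hTTs : ∀ (i : Fin d → ℕ) (j : Fin d), TT (i + Pi.single j 1) = T j * TT i)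
    (B : ℕ → Submodule k V)
    (hB : ∀ N, B N = ⨆ (m : Fin d → ℕ) (_ : ∑ l, m l ≤ N), C m)
    -- (H2)
    (H2a : ∀ j, ∀ v ∈ C 0, T j v ∈ C (Pi.single j 1))
    (H2b : ∀ j : Fin d, Set.InjOn (⇑(T j)) (C 0 : Set V))
    -- (H3)
    (H3 : ∀ m : Fin d → ℕ, m ≠ 0 → ∀ j : Fin d, ∀ v ∈ C m,
      T j v ∈ (if m j = 0 then (⊥ : Submodule k V) else C (m - Pi.single j 1))
        ⊔ C m ⊔ C (m + Pi.single j 1))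
    -- (H4)
    (H4 : ∀ (j : Fin d) (N : ℕ), ∀ f ∈ B (N + 1), T j f ∈ B (N + 1) → f ∈ B N) :
    ∀ i j : Fin d → ℕ,
      Set.MapsTo (fun v => π (i + j) (TT i v)) (C j : Set V) (C (i + j) : Set V) ∧
      Set.InjOn (fun v => π (i + j) (TT i v)) (C j : Set V) := by
  classical
  set σ : (Fin d → ℕ) → ℕ := fun m => ∑ l, m l with hσ
  have hσadd : ∀ a b : Fin d → ℕ, σ (a + b) = σ a + σ b := by
    intro a b; simp [σ, Finset.sum_add_distrib]
  have hσsingle : ∀ l : Fin d, σ (Pi.single l 1) = 1 := by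
    intro l; simp [σ, Pi.single_apply]
  have hσ0 : ∀ m : Fin d → ℕ, σ m = 0 → m = 0 := by
    intro m hm; funext t
    have h1 : m t ≤ σ m :=
      Finset.single_le_sum (f := fun t => m t) (fun _ _ => Nat.zero_le _) (Finset.mem_univ t)
    show m t = 0
    omega
  set D : ℕ → Submodule k V := fun N => ⨆ (m : Fin d → ℕ) (_ : σ m < N), C m with hD
  have hCD : ∀ (m : Fin d → ℕ) (N : ℕ), σ m < N → C m ≤ D N :=
    fun m N h => le_iSup₂_of_le m h le_rfl
  have hCB : ∀ (m : Fin d → ℕ) (N : ℕ), σ m ≤ N → C m ≤ B N := by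
    intro m N h; rw [hB]; exact le_iSup₂_of_le m h le_rfl
  have hDB : ∀ N, D N ≤ B N := fun N => iSup₂_le fun m h => hCB m N h.le
  have hDB' : ∀ N, D (N + 1) ≤ B N := fun N => iSup₂_le fun m h => hCB m N (by omega)
  have hBmono : ∀ {N M : ℕ}, N ≤ M → B N ≤ B M := by
    intro N M h; rw [hB, hB]
    exact iSup₂_le fun m hm => le_iSup₂_of_le m (hm.trans h) le_rfl
  have hD0 : D 0 = ⊥ := le_bot_iff.mp (iSup₂_le fun m hm => absurd hm (Nat.not_lt_zero _))
  -- T l maps C m into D (M+1) when σ m < M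
  have hTC : ∀ (l : Fin d) (m : Fin d → ℕ) (M : ℕ), σ m < M → ∀ v ∈ C m, T l v ∈ D (M + 1) := by
    intro l m M hm v hv
    by_cases h0 : m = 0
    · subst h0
      exact hCD _ _ (by rw [hσsingle]; omega) (H2a l v hv)
    · have hle : ((if m l = 0 then (⊥ : Submodule k V) else C (m - Pi.single l 1))
          ⊔ C m ⊔ C (m + Pi.single l 1)) ≤ D (M + 1) := by
        refine sup_le (sup_le ?_ ?_) ?_
        · split
          · exact bot_le
          · refine hCD _ _ ?_
            have hsum : σ (m - Pi.single l 1) ≤ σ m :=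
              Finset.sum_le_sum fun t _ => Nat.sub_le _ _
            exact lt_of_le_of_lt hsum (Nat.lt_succ_of_lt hm)
        · exact hCD _ _ (by omega)
        · exact hCD _ _ (by rw [hσadd, hσsingle]; omega)
      exact hle (H3 m h0 l v hv)
  have hTD : ∀ (l : Fin d) (M : ℕ), ∀ v ∈ D M, T l v ∈ D (M + 1) := by
    intro l M
    have hle : D M ≤ (D (M + 1)).comap (T l) :=
      iSup₂_le fun m hm v hv => hTC l m M hm v hv
    exact fun v hv => hle hv
  -- π m kills B N when N < σ m
  have hπB : ∀ (m : Fin d → ℕ) (N : ℕ), N < σ m → ∀ v ∈ B N, π m v = 0 := by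
    intro m N h
    have hle : B N ≤ LinearMap.ker (π m) := by
      rw [hB]
      refine iSup₂_le fun m' hm' v hv => ?_
      have hne : m ≠ m' := by
        rintro rfl
        simp only [hσ] at h
        omega
      exact LinearMap.mem_ker.mpr (hπ_ne m m' hne v hv)
    exact fun v hv => LinearMap.mem_ker.mp (hle hv)
  have hπD : ∀ (m : Fin d → ℕ), ∀ v ∈ D (σ m), π m v = 0 := by
    intro m
    have hle : D (σ m) ≤ LinearMap.ker (π m) :=
      iSup₂_le fun m' hm' v hv =>
        LinearMap.mem_ker.mpr (hπ_ne m m' (by rintro rfl; omega) v hv)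
    exact fun v hv => LinearMap.mem_ker.mp (hle hv)
  -- splitting a nonzero multi-index
  have hsplit : ∀ i : Fin d → ℕ, σ i ≠ 0 → ∃ (l : Fin d) (i' : Fin d → ℕ),
      i = i' + Pi.single l 1 ∧ σ i' + 1 = σ i := by
    intro i hi
    have hex : ∃ l, i l ≠ 0 := by
      by_contra h
      push_neg at h
      exact hi (Finset.sum_eq_zero fun l _ => h l)
    obtain ⟨l, hl⟩ := hex
    have hieq : i = (i - Pi.single l 1) + Pi.single l 1 := by
      funext t
      by_cases ht : t = l <;>
        simp [Pi.single_apply, ht] <;> omega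
    refine ⟨l, i - Pi.single l 1, hieq, ?_⟩
    have h2 := hσadd (i - Pi.single l 1) (Pi.single l 1)
    rw [← hieq, hσsingle] at h2
    omega
  -- key structural lemma
  have keyL : ∀ (n : ℕ) (i : Fin d → ℕ), σ i = n → ∀ (j : Fin d → ℕ), ∀ u ∈ C j,
      TT i u ∈ C (i + j) ⊔ D (n + σ j) := by
    intro n
    induction n with
    | zero =>
      intro i hi j u hu
      have hi0 : i = 0 := hσ0 i hi
      subst hi0
      rw [hTT0]
      simp only [zero_add, Module.End.one_apply]
      exact Submodule.mem_sup_left hu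
    | succ n ih =>
      intro i hi j u hu
      obtain ⟨l, i', hieq, hs⟩ := hsplit i (by omega)
      have hσi' : σ i' = n := by omega
      have hTTeq : TT i u = T l (TT i' u) := by
        rw [hieq, hTTs]; rfl
      obtain ⟨c, hc, b, hb, hcb⟩ := Submodule.mem_sup.mp (ih i' hσi' j u hu)
      rw [hTTeq, ← hcb, map_add]
      have hσij : σ (i' + j) = n + σ j := by rw [hσadd, hσi']
      have hbmem : T l b ∈ D (n + 1 + σ j) := by
        have := hTD l (n + σ j) b hb
        have he : n + σ j + 1 = n + 1 + σ j := by omega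
        rwa [he] at this
      have hij : i' + j + Pi.single l 1 = i + j := by
        rw [hieq, add_right_comm]
      have hcmem : T l c ∈ C (i + j) ⊔ D (n + 1 + σ j) := by
        by_cases h0 : i' + j = 0
        · have hsing : Pi.single l 1 = i + j := by
            rw [← hij, h0, zero_add]
          have := H2a l c (h0 ▸ hc)
          rw [hsing] at this
          exact Submodule.mem_sup_left this
        · have hle : ((if (i' + j) l = 0 then (⊥ : Submodule k V)
              else C ((i' + j) - Pi.single l 1)) ⊔ C (i' + j) ⊔ C ((i' + j) + Pi.single l 1))
              ≤ C (i + j) ⊔ D (n + 1 + σ j) := by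
            refine sup_le (sup_le ?_ ?_) ?_
            · split
              · exact bot_le
              · refine le_trans (hCD _ _ ?_) le_sup_right
                have hsum : σ ((i' + j) - Pi.single l 1) ≤ σ (i' + j) :=
                  Finset.sum_le_sum fun t _ => Nat.sub_le _ _
                exact lt_of_le_of_lt hsum (by omega)
            · exact le_trans (hCD _ _ (by omega)) le_sup_right
            · rw [hij]; exact le_sup_left
          exact hle (H3 (i' + j) h0 l c hc)
      exact Submodule.add_mem _ hcmem (Submodule.mem_sup_right hbmem)
  -- stripping lemma
  have keyS : ∀ (n : ℕ) (i : Fin d → ℕ), σ i = n → ∀ (j : Fin d → ℕ), ∀ u ∈ C j, u ≠ 0 →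
      ∀ N : ℕ, N + 1 ≤ n + σ j → TT i u ∈ B N → False := by
    intro n
    induction n with
    | zero =>
      intro i hi j u hu hune N hN hmem
      have hi0 : i = 0 := hσ0 i hi
      rw [hi0, hTT0] at hmem
      simp only [Module.End.one_apply] at hmem
      have h0 : π j u = 0 := hπB j N (by omega) u hmem
      rw [hπ_eq j u hu] at h0
      exact hune h0
    | succ n ih =>
      intro i hi j u hu hune N hN hmem
      obtain ⟨l, i', hieq, hs⟩ := hsplit i (by omega)
      have hσi' : σ i' = n := by omega
      have hf : TT i' u ∈ B (n + σ j) := by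
        have hm := keyL n i' hσi' j u hu
        have hle : C (i' + j) ⊔ D (n + σ j) ≤ B (n + σ j) :=
          sup_le (hCB _ _ (by rw [hσadd, hσi'])) (hDB _)
        exact hle hm
      have hTlf : T l (TT i' u) ∈ B N := by
        rw [hieq, hTTs] at hmem
        exact hmem
      rcases Nat.eq_zero_or_pos (n + σ j) with h0 | hpos
      · have hn : n = 0 := by omega
        have hj0 : j = 0 := hσ0 j (by omega)
        have hi'0 : i' = 0 := hσ0 i' (by omega)
        have hN0 : N = 0 := by omega
        have hfu : TT i' u = u := by rw [hi'0, hTT0]; rfl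
        have h1 : T l u ∈ C (Pi.single l 1) := H2a l u (hj0 ▸ hu)
        have h2 : T l u ∈ B 0 := by rw [← hN0, ← hfu]; exact hTlf
        have h3 : π (Pi.single l 1) (T l u) = 0 :=
          hπB _ 0 (by rw [hσsingle]; omega) _ h2
        have h4 : T l u = 0 := by rw [← hπ_eq _ _ h1, h3]
        have h5 : u = 0 := by
          refine H2b l (hj0 ▸ hu) (Submodule.zero_mem (C 0)) ?_
          rw [h4, map_zero]
        exact hune h5
      · obtain ⟨M, hM⟩ : ∃ M, n + σ j = M + 1 := ⟨n + σ j - 1, by omega⟩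
        have hfB : TT i' u ∈ B (M + 1) := hM ▸ hf
        have hTfB : T l (TT i' u) ∈ B (M + 1) := hBmono (by omega) hTlf
        have hstep := H4 l M _ hfB hTfB
        exact ih i' hσi' j u hu hune M (by omega) hstep
  -- main
  intro i j
  have hkey : ∀ u ∈ C j, ∃ c ∈ C (i + j),
      π (i + j) (TT i u) = c ∧ TT i u - c ∈ D (σ i + σ j) := by
    intro u hu
    obtain ⟨c, hc, b, hb, hcb⟩ := Submodule.mem_sup.mp (keyL (σ i) i rfl j u hu)
    have hbD : b ∈ D (σ (i + j)) := by rw [hσadd]; exact hb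
    refine ⟨c, hc, ?_, ?_⟩
    · rw [← hcb, map_add, hπ_eq _ c hc, hπD (i + j) b hbD, add_zero]
    · rw [← hcb]
      simpa using hb
  constructor
  · intro u hu
    obtain ⟨c, hc, hπc, _⟩ := hkey u hu
    show π (i + j) (TT i u) ∈ (C (i + j) : Set V)
    rw [hπc]; exact hc
  · intro u hu w hw heq
    have hx : u - w ∈ C j := Submodule.sub_mem _ hu hw
    have hπx : π (i + j) (TT i (u - w)) = 0 := by
      rw [map_sub, map_sub]
      exact sub_eq_zero.mpr heq
    obtain ⟨c, hc, hπc, hbd⟩ := hkey (u - w) hx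
    have hc0 : c = 0 := by rw [← hπc, hπx]
    rw [hc0, sub_zero] at hbd
    by_contra hne
    have hxne : u - w ≠ 0 := sub_ne_zero_of_ne hne
    rcases Nat.eq_zero_or_pos (σ i + σ j) with h0 | hpos
    · rw [h0, hD0, Submodule.mem_bot] at hbd
      have hi0 : i = 0 := hσ0 i (by omega)
      rw [hi0, hTT0] at hbd
      simp only [Module.End.one_apply] at hbd
      exact hxne hbd
    · obtain ⟨M, hM⟩ : ∃ M, σ i + σ j = M + 1 := ⟨σ i + σ j - 1, by omega⟩
      have hmemB : TT i (u - w) ∈ B M := hDB' M (hM ▸ hbd)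
      exact keyS (σ i) i rfl j (u - w) hx hxne M (by omega) hmemB
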